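/- Let 0 ≤ α < β be real numbers, let S and S₀ be C¹ survival functions on [α,β] with hazard rates λ := −S'/S and λ₀ := −S₀'/S₀, let φ : ℝ → ℝ be continuously differentiable on [α,β], and set L_S(y) := ∫_y^β S(u) φ'(u) du and L_{S₀}(y) := ∫_y^β S₀(u) φ'(u) du. Let ω : ℝ → ℝ be continuously differentiable on [α,β] and put v := max(sup_{y∈[α,β]} |ω(y)|, ∫_α^β |ω'(y)| dy). Then |∫_α^β ω(y) [ (L_S(y)/S(y)) λ(y) − (L_{S₀}(y)/S₀(y)) λ₀(y) ] dy| ≤ 3 v · sup_{y∈[α,β]} |L_S(y)/S(y) − L_{S₀}(y)/S₀(y)|. (Lemma 1(c).) -/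

import Mathlib

open Set intervalIntegral

/-- Lemma 1(c): with `L_S y = ∫_y^β S u φ' u du`, `v = max(sup |ω|, ∫ |ω'|)`,
`|∫_α^β ω [ (L_S/S) λ - (L_{S₀}/S₀) λ₀ ]| ≤ 3 v sup_{[α,β]} |L_S/S - L_{S₀}/S₀|`. -/
theorem weighted_hazard_integral_bound
    (α β : ℝ) (hα : 0 ≤ α) (hαβ : α < β)
    (S S' S₀ S₀' φ φ' ω ω' : ℝ → ℝ)
    (hS : ∀ y ∈ Icc α β, HasDerivAt S (S' y) y)
    (hS'c : ContinuousOn S' (Icc α β))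
    (hSmono : AntitoneOn S (Icc α β))
    (hSpos : ∀ y ∈ Icc α β, 0 < S y ∧ S y ≤ 1)
    (hS₀ : ∀ y ∈ Icc α β, HasDerivAt S₀ (S₀' y) y)
    (hS₀'c : ContinuousOn S₀' (Icc α β))
    (hS₀mono : AntitoneOn S₀ (Icc α β))
    (hS₀pos : ∀ y ∈ Icc α β, 0 < S₀ y ∧ S₀ y ≤ 1)
    (hφ : ∀ y ∈ Icc α β, HasDerivAt φ (φ' y) y)
    (hφ'c : ContinuousOn φ' (Icc α β))
    (hω : ∀ y ∈ Icc α β, HasDerivAt ω (ω' y) y)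
    (hω'c : ContinuousOn ω' (Icc α β))
    (L L₀ : ℝ → ℝ)
    (hL : ∀ y, L y = ∫ u in y..β, S u * φ' u)
    (hL₀ : ∀ y, L₀ y = ∫ u in y..β, S₀ u * φ' u)
    (v : ℝ)
    (hv : v = max (⨆ y : Icc α β, |ω y.1|) (∫ y in α..β, |ω' y|)) :
    |∫ y in α..β,
        ω y * ((L y / S y) * (-(S' y) / S y) - (L₀ y / S₀ y) * (-(S₀' y) / S₀ y))|
      ≤ 3 * v * ⨆ y : Icc α β, |L y.1 / S y.1 - L₀ y.1 / S₀ y.1| := by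
  have hab : α ≤ β := hαβ.le
  have hαI : α ∈ Icc α β := ⟨le_refl α, hab⟩
  have hβI : β ∈ Icc α β := ⟨hab, le_refl β⟩
  have huIcc : uIcc α β = Icc α β := uIcc_of_le hab
  -- continuity of the basic functions
  have hScont : ContinuousOn S (Icc α β) := fun y hy =>
    ((hS y hy).continuousAt).continuousWithinAt
  have hS₀cont : ContinuousOn S₀ (Icc α β) := fun y hy =>
    ((hS₀ y hy).continuousAt).continuousWithinAt
  have hωcont : ContinuousOn ω (Icc α β) := fun y hy =>
    ((hω y hy).continuousAt).continuousWithinAt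
  have hSne : ∀ y ∈ Icc α β, S y ≠ 0 := fun y hy => ne_of_gt (hSpos y hy).1
  have hS₀ne : ∀ y ∈ Icc α β, S₀ y ≠ 0 := fun y hy => ne_of_gt (hS₀pos y hy).1
  -- projection onto [α, β]
  set π : ℝ → ℝ := fun x => (projIcc α β hab x : ℝ) with hπdef
  have hπc : Continuous π := continuous_subtype_val.comp continuous_projIcc
  have hπmem : ∀ x, π x ∈ Icc α β := fun x => (projIcc α β hab x).2
  have hπid : ∀ x ∈ Icc α β, π x = x := fun x hx => by
    simp [hπdef, projIcc_of_mem hab hx]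
  -- globally continuous extensions of the integrands
  set F : ℝ → ℝ := fun u => S (π u) * φ' (π u) with hFdef
  have hFc : Continuous F :=
    (hScont.comp_continuous hπc hπmem).mul (hφ'c.comp_continuous hπc hπmem)
  set F₀ : ℝ → ℝ := fun u => S₀ (π u) * φ' (π u) with hF₀def
  have hF₀c : Continuous F₀ :=
    (hS₀cont.comp_continuous hπc hπmem).mul (hφ'c.comp_continuous hπc hπmem)
  set LF : ℝ → ℝ := fun y => ∫ u in y..β, F u with hLFdef
  set LF₀ : ℝ → ℝ := fun y => ∫ u in y..β, F₀ u with hLF₀def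
  -- L agrees with LF on [α,β]
  have hLeq : EqOn L LF (Icc α β) := by
    intro y hy
    rw [hL, hLFdef]
    apply intervalIntegral.integral_congr
    intro u hu
    have hu' : u ∈ Icc α β := by
      rw [uIcc_of_le hy.2] at hu
      exact ⟨le_trans hy.1 hu.1, hu.2⟩
    simp [hFdef, hπid u hu']
  have hL₀eq : EqOn L₀ LF₀ (Icc α β) := by
    intro y hy
    rw [hL₀, hLF₀def]
    apply intervalIntegral.integral_congr
    intro u hu
    have hu' : u ∈ Icc α β := by
      rw [uIcc_of_le hy.2] at hu
      exact ⟨le_trans hy.1 hu.1, hu.2⟩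
    simp [hF₀def, hπid u hu']
  -- derivative of LF everywhere
  have hLF' : ∀ y, HasDerivAt LF (-(F y)) y := fun y =>
    intervalIntegral.integral_hasDerivAt_left (hFc.intervalIntegrable y β)
      (hFc.stronglyMeasurableAtFilter _ _) hFc.continuousAt
  have hLF₀' : ∀ y, HasDerivAt LF₀ (-(F₀ y)) y := fun y =>
    intervalIntegral.integral_hasDerivAt_left (hF₀c.intervalIntegrable y β)
      (hF₀c.stronglyMeasurableAtFilter _ _) hF₀c.continuousAt
  have hLFcont : Continuous LF := by
    rw [continuous_iff_continuousAt]; exact fun y => (hLF' y).continuousAt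
  have hLF₀cont : Continuous LF₀ := by
    rw [continuous_iff_continuousAt]; exact fun y => (hLF₀' y).continuousAt
  have hLcont : ContinuousOn L (Icc α β) := hLFcont.continuousOn.congr hLeq
  have hL₀cont : ContinuousOn L₀ (Icc α β) := hLF₀cont.continuousOn.congr hL₀eq
  -- derivative of L at interior points
  have hLd : ∀ y ∈ Ioo α β, HasDerivAt L (-(S y * φ' y)) y := by
    intro y hy
    have hmem : Icc α β ∈ nhds y := Icc_mem_nhds hy.1 hy.2
    have heq : L =ᶠ[nhds y] LF := Filter.eventuallyEq_of_mem hmem hLeq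
    have := (hLF' y).congr_of_eventuallyEq heq
    simpa [hFdef, hπid y (Ioo_subset_Icc_self hy)] using this
  have hL₀d : ∀ y ∈ Ioo α β, HasDerivAt L₀ (-(S₀ y * φ' y)) y := by
    intro y hy
    have hmem : Icc α β ∈ nhds y := Icc_mem_nhds hy.1 hy.2
    have heq : L₀ =ᶠ[nhds y] LF₀ := Filter.eventuallyEq_of_mem hmem hL₀eq
    have := (hLF₀' y).congr_of_eventuallyEq heq
    simpa [hF₀def, hπid y (Ioo_subset_Icc_self hy)] using this
  -- abbreviations
  set D : ℝ → ℝ := fun y => L y / S y - L₀ y / S₀ y with hDdef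
  set H : ℝ → ℝ := fun y =>
    (L y / S y) * (-(S' y) / S y) - (L₀ y / S₀ y) * (-(S₀' y) / S₀ y) with hHdef
  set G : ℝ → ℝ := fun y => ω y * D y with hGdef
  -- continuity
  have hDcont : ContinuousOn D (Icc α β) :=
    (hLcont.div hScont hSne).sub (hL₀cont.div hS₀cont hS₀ne)
  have hHcont : ContinuousOn H (Icc α β) := by
    apply ContinuousOn.sub
    · exact (hLcont.div hScont hSne).mul ((hS'c.neg).div hScont hSne)
    · exact (hL₀cont.div hS₀cont hS₀ne).mul ((hS₀'c.neg).div hS₀cont hS₀ne)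
  have hGcont : ContinuousOn G (Icc α β) := hωcont.mul hDcont
  -- derivative of G at interior points
  have hGd : ∀ y ∈ Ioo α β, HasDerivAt G (ω' y * D y + ω y * H y) y := by
    intro y hy
    have hy' : y ∈ Icc α β := Ioo_subset_Icc_self hy
    have hg1 : HasDerivAt (fun z => L z / S z)
        (-(φ' y) + (L y / S y) * (-(S' y) / S y)) y := by
      have h : HasDerivAt (fun z => L z / S z) _ y := (hLd y hy).div (hS y hy') (hSne y hy')
      convert h using 1
      show -(φ' y) + L y / S y * (-(S' y) / S y) = (-(S y * φ' y) * S y - L y * S' y) / S y ^ 2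
      have hs := hSne y hy'
      rw [eq_div_iff (pow_ne_zero 2 hs)]
      have e : L y / S y * (-(S' y) / S y) * S y ^ 2 = -(L y * S' y) := by
        rw [div_mul_div_comm, div_mul_eq_mul_div, div_eq_iff (mul_ne_zero hs hs)]; ring
      linear_combination e
    have hg2 : HasDerivAt (fun z => L₀ z / S₀ z)
        (-(φ' y) + (L₀ y / S₀ y) * (-(S₀' y) / S₀ y)) y := by
      have h : HasDerivAt (fun z => L₀ z / S₀ z) _ y := (hL₀d y hy).div (hS₀ y hy') (hS₀ne y hy')
      convert h using 1
      show -(φ' y) + L₀ y / S₀ y * (-(S₀' y) / S₀ y) = (-(S₀ y * φ' y) * S₀ y - L₀ y * S₀' y) / S₀ y ^ 2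
      have hs := hS₀ne y hy'
      rw [eq_div_iff (pow_ne_zero 2 hs)]
      have e : L₀ y / S₀ y * (-(S₀' y) / S₀ y) * S₀ y ^ 2 = -(L₀ y * S₀' y) := by
        rw [div_mul_div_comm, div_mul_eq_mul_div, div_eq_iff (mul_ne_zero hs hs)]; ring
      linear_combination e
    have hDd : HasDerivAt D (H y) y := by
      have h := hg1.sub hg2
      have : (-(φ' y) + (L y / S y) * (-(S' y) / S y)) -
          (-(φ' y) + (L₀ y / S₀ y) * (-(S₀' y) / S₀ y)) = H y := by
        rw [hHdef]; ring
      rw [← this]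
      exact h
    exact (hω y hy').mul hDd
  -- integrability
  have hint1 : IntervalIntegrable (fun y => ω' y * D y) MeasureTheory.volume α β := by
    apply ContinuousOn.intervalIntegrable
    rw [huIcc]
    exact hω'c.mul hDcont
  have hint2 : IntervalIntegrable (fun y => ω y * H y) MeasureTheory.volume α β := by
    apply ContinuousOn.intervalIntegrable
    rw [huIcc]
    exact hωcont.mul hHcont
  -- fundamental theorem of calculus
  have key : (∫ y in α..β, (ω' y * D y + ω y * H y)) = G β - G α :=
    intervalIntegral.integral_eq_sub_of_hasDeriv_right_of_le hab hGcont
      (fun y hy => (hGd y hy).hasDerivWithinAt) (hint1.add hint2)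
  have hGβ : G β = 0 := by
    simp [hGdef, hDdef, hL β, hL₀ β, intervalIntegral.integral_same]
  have hsplit : (∫ y in α..β, ω y * H y) = -G α - ∫ y in α..β, ω' y * D y := by
    have hadd := intervalIntegral.integral_add hint1 hint2
    rw [key, hGβ] at hadd
    linarith
  -- the supremum M
  set M := ⨆ y : Icc α β, |L y.1 / S y.1 - L₀ y.1 / S₀ y.1| with hMdef
  have hrange : (Set.range fun y : Icc α β => |D y.1|) = (fun y => |D y|) '' Icc α β := by
    rw [show (fun y : Icc α β => |D y.1|) = (fun y => |D y|) ∘ Subtype.val from rfl,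
      Set.range_comp, Subtype.range_coe]
  have hbddD : BddAbove (Set.range fun y : Icc α β => |D y.1|) := by
    rw [hrange]
    exact (isCompact_Icc.image_of_continuousOn hDcont.abs).bddAbove
  have hMeq : M = ⨆ y : Icc α β, |D y.1| := by rw [hMdef, hDdef]
  have hDle : ∀ y ∈ Icc α β, |D y| ≤ M := by
    intro y hy
    rw [hMeq]
    exact le_ciSup hbddD ⟨y, hy⟩
  have hM0 : 0 ≤ M := le_trans (abs_nonneg _) (hDle α hαI)
  -- bounds from v
  have hrangeω : (Set.range fun y : Icc α β => |ω y.1|) = (fun y => |ω y|) '' Icc α β := by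
    rw [show (fun y : Icc α β => |ω y.1|) = (fun y => |ω y|) ∘ Subtype.val from rfl,
      Set.range_comp, Subtype.range_coe]
  have hbddω : BddAbove (Set.range fun y : Icc α β => |ω y.1|) := by
    rw [hrangeω]
    exact (isCompact_Icc.image_of_continuousOn hωcont.abs).bddAbove
  have hωle : ∀ y ∈ Icc α β, |ω y| ≤ v := by
    intro y hy
    rw [hv]
    exact le_trans (le_ciSup hbddω ⟨y, hy⟩) (le_max_left _ _)
  have hv2 : (∫ y in α..β, |ω' y|) ≤ v := by rw [hv]; exact le_max_right _ _
  have hv0 : 0 ≤ v := le_trans (abs_nonneg _) (hωle α hαI)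
  -- bound the integral term
  have hintabs : IntervalIntegrable (fun y => |ω' y| * M) MeasureTheory.volume α β := by
    apply ContinuousOn.intervalIntegrable
    rw [huIcc]
    exact hω'c.abs.mul continuousOn_const
  have hintDabs : IntervalIntegrable (fun y => |ω' y * D y|) MeasureTheory.volume α β :=
    hint1.abs
  have hmono : (∫ y in α..β, |ω' y * D y|) ≤ ∫ y in α..β, |ω' y| * M := by
    apply intervalIntegral.integral_mono_on hab hintDabs hintabs
    intro y hy
    rw [abs_mul]
    exact mul_le_mul_of_nonneg_left (hDle y hy) (abs_nonneg _)
  have hmul : (∫ y in α..β, |ω' y| * M) = (∫ y in α..β, |ω' y|) * M :=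
    intervalIntegral.integral_mul_const M fun y => |ω' y|
  have hbound2 : |∫ y in α..β, ω' y * D y| ≤ v * M := by
    calc |∫ y in α..β, ω' y * D y| ≤ ∫ y in α..β, |ω' y * D y| :=
          intervalIntegral.abs_integral_le_integral_abs hab
      _ ≤ ∫ y in α..β, |ω' y| * M := hmono
      _ = (∫ y in α..β, |ω' y|) * M := hmul
      _ ≤ v * M := mul_le_mul_of_nonneg_right hv2 hM0
  have hbound1 : |G α| ≤ v * M := by
    rw [hGdef]
    simp only
    rw [abs_mul]
    exact mul_le_mul (hωle α hαI) (hDle α hαI) (abs_nonneg _) hv0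
  -- conclude
  have hgoal : (∫ y in α..β,
      ω y * ((L y / S y) * (-(S' y) / S y) - (L₀ y / S₀ y) * (-(S₀' y) / S₀ y)))
      = -G α - ∫ y in α..β, ω' y * D y := by
    rw [← hsplit, hHdef]
  rw [hgoal]
  calc |(-G α - ∫ y in α..β, ω' y * D y)|
      ≤ |G α| + |∫ y in α..β, ω' y * D y| := by
        have := abs_sub (-G α) (∫ y in α..β, ω' y * D y)
        simpa [abs_neg] using this
    _ ≤ v * M + v * M := add_le_add hbound1 hbound2
    _ ≤ 3 * v * M := by nlinarith [mul_nonneg hv0 hM0]
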